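/- Let m > 0 and k > 0 and ω = √(k² + m²). The reflection amplitude R_k = (Γ(1/2−i(k+ω))² / Γ(1/2+i(k−ω))²) · (Γ(2ik)/Γ(−2ik)) satisfies |R_k|² = cosh²(π(k−ω)) / cosh²(π(k+ω)). -/

import Mathlib

open Real Complex

/-- `ω = √(k² + m²)`. -/
noncomputable def bhOmega (m k : ℝ) : ℝ := Real.sqrt (k ^ 2 + m ^ 2)

/-- The reflection amplitude
`R_k = (Γ(1/2−i(k+ω))²/Γ(1/2+i(k−ω))²)·(Γ(2ik)/Γ(−2ik))`. -/
noncomputable def bhR (m k : ℝ) : ℂ :=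
  (Complex.Gamma (1 / 2 - Complex.I * ((k : ℂ) + (bhOmega m k : ℂ))) ^ 2 /
      Complex.Gamma (1 / 2 + Complex.I * ((k : ℂ) - (bhOmega m k : ℂ))) ^ 2) *
    (Complex.Gamma (2 * Complex.I * (k : ℂ)) /
      Complex.Gamma (-(2 * Complex.I * (k : ℂ))))

lemma abs_Gamma_half_sq (t : ℝ) :
    ‖Complex.Gamma (1 / 2 + Complex.I * (t : ℂ))‖ ^ 2
      = π / Real.cosh (π * t) := by
  have h1 : (1 : ℂ) - (1 / 2 + Complex.I * t) = (starRingEnd ℂ) (1 / 2 + Complex.I * (t : ℂ)) := by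
    simp [Complex.ext_iff]
    norm_num
  have key := Complex.Gamma_mul_Gamma_one_sub (1 / 2 + Complex.I * (t : ℂ))
  rw [h1, Complex.Gamma_conj, Complex.mul_conj] at key
  have h2 : (π : ℂ) * (1 / 2 + Complex.I * t) = ((π / 2 : ℝ) : ℂ) + ((π * t : ℝ) : ℂ) * Complex.I := by
    push_cast; ring
  rw [h2, Complex.sin_add, Complex.cos_mul_I] at key
  have h3 : Complex.sin ((π / 2 : ℝ) : ℂ) = 1 := by
    rw [← Complex.ofReal_sin, Real.sin_pi_div_two]; norm_num
  have h4 : Complex.cos ((π / 2 : ℝ) : ℂ) = 0 := by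
    rw [← Complex.ofReal_cos, Real.cos_pi_div_two]; norm_num
  rw [h3, h4, ← Complex.ofReal_cosh] at key
  simp only [one_mul, zero_mul, add_zero] at key
  rw [Complex.sq_norm]
  have : ((Complex.normSq (Complex.Gamma (1 / 2 + Complex.I * (t : ℂ))) : ℝ) : ℂ)
      = ((π / Real.cosh (π * t) : ℝ) : ℂ) := by
    rw [key]; push_cast; ring
  exact_mod_cast this

/-- `|R_k|² = cosh²(π(k−ω))/cosh²(π(k+ω))`. -/
theorem bhR_abs_sq (m k : ℝ) (hm : 0 < m) (hk : 0 < k) :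
    ‖bhR m k‖ ^ 2
      = Real.cosh (π * (k - bhOmega m k)) ^ 2 /
          Real.cosh (π * (k + bhOmega m k)) ^ 2 := by
  set ω := bhOmega m k with hω
  -- ratio of Gammas at ±2ik has modulus 1
  have hconj : -(2 * Complex.I * (k : ℂ)) = (starRingEnd ℂ) (2 * Complex.I * (k : ℂ)) := by
    simp [Complex.ext_iff]
  have hGne : Complex.Gamma (2 * Complex.I * (k : ℂ)) ≠ 0 := by
    apply Complex.Gamma_ne_zero
    intro n hn
    have := congrArg Complex.im hn
    simp at this
    nlinarith [this]
  have habs1 : ‖Complex.Gamma (2 * Complex.I * (k : ℂ)) /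
      Complex.Gamma (-(2 * Complex.I * (k : ℂ)))‖ = 1 := by
    rw [hconj, Complex.Gamma_conj, norm_div, Complex.norm_conj, div_self]
    exact fun h => hGne (norm_eq_zero.mp h)
  -- rewrite the first Gamma argument
  have harg : (1 / 2 : ℂ) - Complex.I * ((k : ℂ) + (ω : ℂ))
      = 1 / 2 + Complex.I * ((-(k + ω) : ℝ) : ℂ) := by push_cast; ring
  have harg2 : (1 / 2 : ℂ) + Complex.I * ((k : ℂ) - (ω : ℂ))
      = 1 / 2 + Complex.I * (((k - ω) : ℝ) : ℂ) := by push_cast; ring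
  have hA := abs_Gamma_half_sq (-(k + ω))
  have hB := abs_Gamma_half_sq (k - ω)
  rw [mul_neg, Real.cosh_neg] at hA
  have hcoshP : Real.cosh (π * (k + ω)) ≠ 0 := (Real.cosh_pos _).ne'
  have hcoshM : Real.cosh (π * (k - ω)) ≠ 0 := (Real.cosh_pos _).ne'
  have hπ : π ≠ 0 := Real.pi_ne_zero
  have hBne : ‖Complex.Gamma (1 / 2 + Complex.I * (((k - ω) : ℝ) : ℂ))‖ ≠ 0 := by
    intro h
    rw [h] at hB
    simp at hB
    exact hπ (by field_simp at hB; linarith [hB])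
  rw [bhR, norm_mul, habs1, mul_one, norm_div, norm_pow, norm_pow, harg, harg2]
  rw [div_pow, hA, hB]
  field_simp
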